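/- arXiv:2110.13491 — 3 statements merged into one kernel-verified Lean document; each statement's English description precedes it below -/
import Mathlib

section
/- Let d : ℝ → ℝ be a monotone increasing function with d(0) = 0, and let c₀, c₁, ..., c_m be real numbers. Define D(c) = ∫₀^c (d(c) - d(ξ)) dξ. Then ∑_{k=1}^m (d(c_k) - d(c_{k-1})) · c_k ≥ D(c_m) - D(c_0), and in particular this sum is ≥ -D(c_0). -/
open intervalIntegral

/-- Abel-type summation lower bound (Lemma 3.5 of the paper). -/
theorem stmt_0 (d : ℝ → ℝ) (hd : Monotone d) (hd0 : d 0 = 0)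
    (D : ℝ → ℝ) (hD : ∀ c : ℝ, D c = ∫ ξ in (0:ℝ)..c, (d c - d ξ))
    (m : ℕ) (c : ℕ → ℝ) :
    (∑ k ∈ Finset.Icc 1 m, (d (c k) - d (c (k - 1))) * c k) ≥ D (c m) - D (c 0) ∧
    (∑ k ∈ Finset.Icc 1 m, (d (c k) - d (c (k - 1))) * c k) ≥ -D (c 0) := by
  have hint : ∀ a b : ℝ, IntervalIntegrable d MeasureTheory.volume a b :=
    fun a b => hd.intervalIntegrable
  have hDrw : ∀ x : ℝ, D x = x * d x - ∫ ξ in (0:ℝ)..x, d ξ := by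
    intro x
    rw [hD x, intervalIntegral.integral_sub intervalIntegrable_const (hint 0 x),
      intervalIntegral.integral_const]
    simp [smul_eq_mul]
  have key : ∀ a b : ℝ, D b - D a ≤ (d b - d a) * b := by
    intro a b
    have hsplit : (∫ ξ in (0:ℝ)..a, d ξ) + ∫ ξ in a..b, d ξ = ∫ ξ in (0:ℝ)..b, d ξ :=
      intervalIntegral.integral_add_adjacent_intervals (hint 0 a) (hint a b)
    have hineq : (b - a) * d a ≤ ∫ ξ in a..b, d ξ := by
      rcases le_total a b with h | h
      · have h1 : (∫ _ in a..b, d a) ≤ ∫ ξ in a..b, d ξ :=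
          intervalIntegral.integral_mono_on h intervalIntegrable_const (hint a b)
            (fun x hx => hd hx.1)
        simpa [smul_eq_mul] using h1
      · have h1 : (∫ ξ in b..a, d ξ) ≤ ∫ _ in b..a, d a :=
          intervalIntegral.integral_mono_on h (hint b a) intervalIntegrable_const
            (fun x hx => hd hx.2)
        rw [intervalIntegral.integral_symm a b, intervalIntegral.integral_const,
          smul_eq_mul] at h1
        linarith
    rw [hDrw a, hDrw b]
    nlinarith [hsplit, hineq]
  have hD0 : D 0 = 0 := by rw [hD]; simp
  have hDnonneg : ∀ x : ℝ, 0 ≤ D x := by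
    intro x
    have := key x 0
    rw [hD0] at this
    nlinarith
  have tel : ∀ n : ℕ, D (c n) - D (c 0) ≤
      ∑ k ∈ Finset.Icc 1 n, (d (c k) - d (c (k - 1))) * c k := by
    intro n
    induction n with
    | zero => simp
    | succ n ih =>
      rw [Finset.sum_Icc_succ_top (by omega : 1 ≤ n + 1)]
      have hk := key (c n) (c (n + 1))
      simp only [Nat.add_sub_cancel]
      linarith
  refine ⟨tel m, ?_⟩
  have := hDnonneg (c m)
  linarith [tel m]
end

section
/- Suppose b : [0,1] → ℝ satisfies: there exist constants δ ∈ (0, 1/2), τ_w, τ_o > 0, and positive constants C₁, ..., C₆ such that C₁ S^{τ_w} ≤ b(S) ≤ C₂ S^{τ_w} for S ∈ [0, δ], C₃ ≤ b(S) ≤ C₄ for S ∈ [δ, 1-δ], and C₅ (1-S)^{τ_o} ≤ b(S) ≤ C₆ (1-S)^{τ_o} for S ∈ [1-δ, 1]. Define θ(S) = ∫₀^S b(ξ) dξ and τ = max(τ_w, τ_o). Then there exist constants C̃ > 0 and C₀ > 0 such that for all S₁, S₂ ∈ [0,1]: C̃ |S₂ - S₁|^{2+τ} ≤ (θ(S₂)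 - θ(S₁)) (S₂ - S₁) ≤ C₀ (S₂ - S₁)². -/
open MeasureTheory intervalIntegral Set

private lemma rpow_le_rpow_exp {x p q : ℝ} (hx0 : 0 ≤ x) (hx1 : x ≤ 1)
    (hp : 0 < p) (hpq : p ≤ q) : x ^ q ≤ x ^ p := by
  rcases eq_or_lt_of_le hx0 with h | h
  · simp [← h, Real.zero_rpow hp.ne', Real.zero_rpow (hp.trans_le hpq).ne']
  · exact Real.rpow_le_rpow_of_exponent_ge h hx1 hpq

/-- two-sided degenerate coercivity of the Kirchhoff transform θ
(Lemma 3.3 of the paper), under the three-zone bounds on b. -/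
theorem stmt_2 (b : ℝ → ℝ) (δ τw τo C₁ C₂ C₃ C₄ C₅ C₆ : ℝ)
    (hδ : δ ∈ Set.Ioo (0:ℝ) (1/2)) (hτw : 0 < τw) (hτo : 0 < τo)
    (hC₁ : 0 < C₁) (hC₂ : 0 < C₂) (hC₃ : 0 < C₃) (hC₄ : 0 < C₄) (hC₅ : 0 < C₅) (hC₆ : 0 < C₆)
    (hb0 : ∀ S ∈ Set.Icc (0:ℝ) δ, C₁ * S ^ τw ≤ b S ∧ b S ≤ C₂ * S ^ τw)
    (hbm : ∀ S ∈ Set.Icc δ (1 - δ), C₃ ≤ b S ∧ b S ≤ C₄)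
    (hb1 : ∀ S ∈ Set.Icc (1 - δ) 1, C₅ * (1 - S) ^ τo ≤ b S ∧ b S ≤ C₆ * (1 - S) ^ τo)
    (hbint : IntervalIntegrable b MeasureTheory.volume 0 1)
    (θ : ℝ → ℝ) (hθ : ∀ S : ℝ, θ S = ∫ ξ in (0:ℝ)..S, b ξ)
    (τ : ℝ) (hτ : τ = max τw τo) :
    ∃ Ctil C₀ : ℝ, 0 < Ctil ∧ 0 < C₀ ∧
      ∀ S₁ ∈ Set.Icc (0:ℝ) 1, ∀ S₂ ∈ Set.Icc (0:ℝ) 1,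
        Ctil * |S₂ - S₁| ^ (2 + τ) ≤ (θ S₂ - θ S₁) * (S₂ - S₁) ∧
        (θ S₂ - θ S₁) * (S₂ - S₁) ≤ C₀ * (S₂ - S₁) ^ 2 := by
  obtain ⟨hδ0, hδh⟩ := hδ
  set K : ℝ := min C₁ (min C₃ C₅) with hK
  have hKpos : 0 < K := lt_min hC₁ (lt_min hC₃ hC₅)
  set M : ℝ := max C₂ (max C₄ C₆) with hM
  have hMpos : 0 < M := lt_of_lt_of_le hC₂ (le_max_left _ _)
  have hτpos : 0 < τ := hτ ▸ lt_max_of_lt_left hτw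
  have hτwτ : τw ≤ τ := hτ ▸ le_max_left _ _
  have hτoτ : τo ≤ τ := hτ ▸ le_max_right _ _
  -- pointwise lower bound
  have hlow : ∀ x ∈ Icc (0:ℝ) 1, K * (x * (1 - x)) ^ τ ≤ b x := by
    intro x hx
    obtain ⟨hx0, hx1⟩ := hx
    have hx1' : (0:ℝ) ≤ 1 - x := by linarith
    have hprod0 : 0 ≤ x * (1 - x) := mul_nonneg hx0 hx1'
    have hprod1 : x * (1 - x) ≤ 1 := by nlinarith
    have hsplit : (x * (1 - x)) ^ τ = x ^ τ * (1 - x) ^ τ := Real.mul_rpow hx0 hx1'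
    rcases le_or_gt x δ with hcase | hcase
    · have hb := (hb0 x ⟨hx0, hcase⟩).1
      have h1 : x ^ τ ≤ x ^ τw := rpow_le_rpow_exp hx0 hx1 hτw hτwτ
      have h2 : (1 - x) ^ τ ≤ 1 := Real.rpow_le_one hx1' (by linarith) hτpos.le
      have h3 : (x * (1 - x)) ^ τ ≤ x ^ τw := by
        rw [hsplit]
        calc x ^ τ * (1 - x) ^ τ ≤ x ^ τw * 1 :=
              mul_le_mul h1 h2 (Real.rpow_nonneg hx1' τ) (Real.rpow_nonneg hx0 τw)
          _ = x ^ τw := by ring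
      calc K * (x * (1 - x)) ^ τ ≤ C₁ * x ^ τw :=
            mul_le_mul (min_le_left _ _) h3 (Real.rpow_nonneg hprod0 τ) hC₁.le
        _ ≤ b x := hb
    · rcases le_or_gt x (1 - δ) with hcase2 | hcase2
      · have hb := (hbm x ⟨hcase.le, hcase2⟩).1
        have h3 : (x * (1 - x)) ^ τ ≤ 1 := Real.rpow_le_one hprod0 hprod1 hτpos.le
        have hKC : K ≤ C₃ := le_trans (min_le_right _ _) (min_le_left _ _)
        calc K * (x * (1 - x)) ^ τ ≤ C₃ * 1 :=
              mul_le_mul hKC h3 (Real.rpow_nonneg hprod0 τ) hC₃.le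
          _ = C₃ := by ring
          _ ≤ b x := hb
      · have hb := (hb1 x ⟨hcase2.le, hx1⟩).1
        have h1 : (1 - x) ^ τ ≤ (1 - x) ^ τo := rpow_le_rpow_exp hx1' (by linarith) hτo hτoτ
        have h2 : x ^ τ ≤ 1 := Real.rpow_le_one hx0 hx1 hτpos.le
        have h3 : (x * (1 - x)) ^ τ ≤ (1 - x) ^ τo := by
          rw [hsplit]
          calc x ^ τ * (1 - x) ^ τ ≤ 1 * (1 - x) ^ τo :=
                mul_le_mul h2 h1 (Real.rpow_nonneg hx1' τ) (by norm_num)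
            _ = (1 - x) ^ τo := by ring
        have hKC : K ≤ C₅ := le_trans (min_le_right _ _) (min_le_right _ _)
        calc K * (x * (1 - x)) ^ τ ≤ C₅ * (1 - x) ^ τo :=
              mul_le_mul hKC h3 (Real.rpow_nonneg hprod0 τ) hC₅.le
          _ ≤ b x := hb
  -- pointwise upper bound
  have hupp : ∀ x ∈ Icc (0:ℝ) 1, b x ≤ M := by
    intro x hx
    obtain ⟨hx0, hx1⟩ := hx
    have hx1' : (0:ℝ) ≤ 1 - x := by linarith
    rcases le_or_gt x δ with hcase | hcase
    · have hb := (hb0 x ⟨hx0, hcase⟩).2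
      have h1 : x ^ τw ≤ 1 := Real.rpow_le_one hx0 hx1 hτw.le
      calc b x ≤ C₂ * x ^ τw := hb
        _ ≤ C₂ * 1 := by nlinarith [Real.rpow_nonneg hx0 τw]
        _ = C₂ := by ring
        _ ≤ M := le_max_left _ _
    · rcases le_or_gt x (1 - δ) with hcase2 | hcase2
      · exact le_trans (hbm x ⟨hcase.le, hcase2⟩).2
          (le_trans (le_max_left _ _) (le_max_right _ _))
      · have hb := (hb1 x ⟨hcase2.le, hx1⟩).2
        have h1 : (1 - x) ^ τo ≤ 1 := Real.rpow_le_one hx1' (by linarith) hτo.le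
        calc b x ≤ C₆ * (1 - x) ^ τo := hb
          _ ≤ C₆ * 1 := by nlinarith [Real.rpow_nonneg hx1' τo]
          _ = C₆ := by ring
          _ ≤ M := le_trans (le_max_right C₄ C₆) (le_max_right C₂ _)
  have hbnn : ∀ x ∈ Icc (0:ℝ) 1, 0 ≤ b x := fun x hx =>
    le_trans (mul_nonneg hKpos.le
      (Real.rpow_nonneg (mul_nonneg hx.1 (by linarith [hx.2])) τ)) (hlow x hx)
  set Ctil : ℝ := K / 3 * (1 / 6 : ℝ) ^ τ with hCtil
  have hCtilpos : 0 < Ctil := by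
    apply mul_pos (by linarith)
    exact Real.rpow_pos_of_pos (by norm_num) τ
  refine ⟨Ctil, M, hCtilpos, hMpos, ?_⟩
  -- key lemma for ordered pairs
  have key : ∀ S₁ ∈ Icc (0:ℝ) 1, ∀ S₂ ∈ Icc (0:ℝ) 1, S₁ ≤ S₂ →
      Ctil * |S₂ - S₁| ^ (2 + τ) ≤ (θ S₂ - θ S₁) * (S₂ - S₁) ∧
      (θ S₂ - θ S₁) * (S₂ - S₁) ≤ M * (S₂ - S₁) ^ 2 := by
    intro S₁ hS₁ S₂ hS₂ hle
    have hsub : ∀ a c : ℝ, a ∈ Icc (0:ℝ) 1 → c ∈ Icc (0:ℝ) 1 →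
        IntervalIntegrable b volume a c := by
      intro a c ha hc
      refine hbint.mono_set ?_
      rw [Set.uIcc_of_le (zero_le_one)]
      exact Set.uIcc_subset_Icc ha hc
    have hint01 : IntervalIntegrable b volume 0 S₁ :=
      hsub 0 S₁ (by constructor <;> norm_num) hS₁
    have hint02 : IntervalIntegrable b volume 0 S₂ :=
      hsub 0 S₂ (by constructor <;> norm_num) hS₂
    have hint12 : IntervalIntegrable b volume S₁ S₂ := hsub S₁ S₂ hS₁ hS₂
    have hθdiff : θ S₂ - θ S₁ = ∫ x in S₁..S₂, b x := by
      rw [hθ, hθ]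
      exact integral_interval_sub_left hint02 hint01
    have hh0 : 0 ≤ S₂ - S₁ := by linarith
    -- upper bound
    have hIle : (∫ x in S₁..S₂, b x) ≤ (S₂ - S₁) * M := by
      have := intervalIntegral.integral_mono_on hle hint12
        (_root_.intervalIntegrable_const (c := M))
        (fun x hx => hupp x ⟨le_trans hS₁.1 hx.1, le_trans hx.2 hS₂.2⟩)
      simpa using this
    have hub : (θ S₂ - θ S₁) * (S₂ - S₁) ≤ M * (S₂ - S₁) ^ 2 := by
      rw [hθdiff]
      nlinarith [mul_le_mul_of_nonneg_right hIle hh0]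
    refine ⟨?_, hub⟩
    -- lower bound
    rcases eq_or_lt_of_le hh0 with hh | hh
    · have heq : S₂ - S₁ = 0 := hh.symm
      rw [heq, abs_zero, Real.zero_rpow (by positivity : (2:ℝ) + τ ≠ 0)]
      simp
    · set u : ℝ := S₁ + (S₂ - S₁) / 3 with hu
      set v : ℝ := S₂ - (S₂ - S₁) / 3 with hv
      have h1u : S₁ ≤ u := by rw [hu]; linarith
      have huv : u ≤ v := by rw [hu, hv]; linarith
      have hv2 : v ≤ S₂ := by rw [hv]; linarith
      have huIcc : u ∈ Icc (0:ℝ) 1 := ⟨by linarith [hS₁.1], by linarith [hS₂.2]⟩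
      have hvIcc : v ∈ Icc (0:ℝ) 1 := ⟨by linarith [hS₁.1], by linarith [hS₂.2]⟩
      have hi1 : IntervalIntegrable b volume S₁ u := hsub _ _ hS₁ huIcc
      have hi2 : IntervalIntegrable b volume u v := hsub _ _ huIcc hvIcc
      have hi3 : IntervalIntegrable b volume v S₂ := hsub _ _ hvIcc hS₂
      have hsplit : (∫ x in S₁..u, b x) + (∫ x in u..v, b x) + (∫ x in v..S₂, b x)
          = ∫ x in S₁..S₂, b x := by
        rw [integral_add_adjacent_intervals hi1 hi2]
        exact integral_add_adjacent_intervals (hi1.trans hi2) hi3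
      have hnn1 : 0 ≤ ∫ x in S₁..u, b x :=
        intervalIntegral.integral_nonneg h1u
          (fun x hx => hbnn x ⟨le_trans hS₁.1 hx.1, le_trans hx.2 huIcc.2⟩)
      have hnn3 : 0 ≤ ∫ x in v..S₂, b x :=
        intervalIntegral.integral_nonneg hv2
          (fun x hx => hbnn x ⟨le_trans hvIcc.1 hx.1, le_trans hx.2 hS₂.2⟩)
      -- middle bound
      have hmid : ∀ x ∈ Icc u v, K * ((S₂ - S₁) / 6) ^ τ ≤ b x := by
        intro x hx
        have hx0 : (0:ℝ) ≤ x := le_trans huIcc.1 hx.1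
        have hx1 : x ≤ 1 := le_trans hx.2 hvIcc.2
        have hxl : (S₂ - S₁) / 3 ≤ x := by
          have := hx.1; rw [hu] at this; linarith [hS₁.1]
        have hxr : (S₂ - S₁) / 3 ≤ 1 - x := by
          have := hx.2; rw [hv] at this; linarith [hS₂.2]
        have hle6 : (S₂ - S₁) / 6 ≤ x * (1 - x) := by
          rcases le_or_gt x (1/2) with hhalf | hhalf
          · have h2 : (1:ℝ)/2 ≤ 1 - x := by linarith
            calc (S₂ - S₁) / 6 = ((S₂ - S₁) / 3) * (1/2) := by ring
              _ ≤ x * (1 - x) := mul_le_mul hxl h2 (by norm_num) hx0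
          · have h2 : (1:ℝ)/2 ≤ x := hhalf.le
            calc (S₂ - S₁) / 6 = (1/2) * ((S₂ - S₁) / 3) := by ring
              _ ≤ x * (1 - x) := mul_le_mul h2 hxr (by linarith) (by linarith)
        have h1 : ((S₂ - S₁) / 6) ^ τ ≤ (x * (1 - x)) ^ τ :=
          Real.rpow_le_rpow (by linarith) hle6 hτpos.le
        calc K * ((S₂ - S₁) / 6) ^ τ ≤ K * (x * (1 - x)) ^ τ :=
              mul_le_mul_of_nonneg_left h1 hKpos.le
          _ ≤ b x := hlow x ⟨hx0, hx1⟩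
      have hI2 : (v - u) * (K * ((S₂ - S₁) / 6) ^ τ) ≤ ∫ x in u..v, b x := by
        have := intervalIntegral.integral_mono_on huv
          (_root_.intervalIntegrable_const (c := K * ((S₂ - S₁) / 6) ^ τ)) hi2 hmid
        have h' : K * ((v - u) * ((S₂ - S₁) / 6) ^ τ) ≤ ∫ x in u..v, b x := by
          simpa using this
        calc (v - u) * (K * ((S₂ - S₁) / 6) ^ τ)
            = K * ((v - u) * ((S₂ - S₁) / 6) ^ τ) := by ring
          _ ≤ _ := h'
      have hvu : v - u = (S₂ - S₁) / 3 := by rw [hu, hv]; ring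
      have hItot : ((S₂ - S₁) / 3) * (K * ((S₂ - S₁) / 6) ^ τ) ≤ ∫ x in S₁..S₂, b x := by
        rw [← hsplit, ← hvu]; linarith
      -- arithmetic with rpow
      have habs : |S₂ - S₁| = S₂ - S₁ := abs_of_nonneg hh0
      have hpow : (S₂ - S₁) ^ (2 + τ) = (S₂ - S₁) * (S₂ - S₁) * (S₂ - S₁) ^ τ := by
        rw [show (2:ℝ) + τ = 1 + 1 + τ by ring, Real.rpow_add hh, Real.rpow_add hh,
          Real.rpow_one]
      have hsix : ((S₂ - S₁) / 6) ^ τ = (S₂ - S₁) ^ τ * (1 / 6 : ℝ) ^ τ := by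
        rw [show (S₂ - S₁) / 6 = (S₂ - S₁) * (1/6) by ring]
        exact Real.mul_rpow hh0 (by norm_num)
      rw [hθdiff, habs, hpow]
      have hfinal : Ctil * ((S₂ - S₁) * (S₂ - S₁) * (S₂ - S₁) ^ τ)
          = (((S₂ - S₁) / 3) * (K * ((S₂ - S₁) / 6) ^ τ)) * (S₂ - S₁) := by
        rw [hCtil, hsix]; ring
      rw [hfinal]
      exact mul_le_mul_of_nonneg_right hItot hh0
  -- conclude by symmetry
  intro S₁ hS₁ S₂ hS₂
  rcases le_total S₁ S₂ with hle | hle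
  · exact key S₁ hS₁ S₂ hS₂ hle
  · obtain ⟨h1, h2⟩ := key S₂ hS₂ S₁ hS₁ hle
    constructor
    · calc Ctil * |S₂ - S₁| ^ (2 + τ) = Ctil * |S₁ - S₂| ^ (2 + τ) := by rw [abs_sub_comm]
        _ ≤ (θ S₁ - θ S₂) * (S₁ - S₂) := h1
        _ = (θ S₂ - θ S₁) * (S₂ - S₁) := by ring
    · calc (θ S₂ - θ S₁) * (S₂ - S₁) = (θ S₁ - θ S₂) * (S₁ - S₂) := by ring
        _ ≤ M * (S₁ - S₂) ^ 2 := h2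
        _ = M * (S₂ - S₁) ^ 2 := by ring
end

section
/- Let b : [0,1] → ℝ satisfy c (1-S)^{τ_o} S^{τ_w} ≤ b(S) ≤ C₀ for all S ∈ [0,1], with constants c, C₀, τ_w, τ_o > 0. Define θ(S) = ∫₀^S b(ξ) dξ. Then for all 0 ≤ S₁ ≤ S₂ ≤ 1, there exists a constant C̃ > 0 (depending only on c, τ_w, τ_o) such that C̃ (S₂ - S₁)^{1+τ} ≤ θ(S₂) - θ(S₁) ≤ C₀ (S₂ - S₁), where τ = max(τ_w, τ_o). -/
open MeasureTheory intervalIntegral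

private lemma stmt3_aux (τw τo τ L ξ : ℝ) (hτw : 0 < τw) (hτo : 0 < τo)
    (hτ : τ = max τw τo) (hL : 0 < L) (hL1 : L ≤ 1)
    (hξ1 : L / 4 ≤ ξ) (hξ2 : L / 4 ≤ 1 - ξ) (hξ3 : 0 ≤ ξ) (hξ4 : ξ ≤ 1) :
    (L / 8) ^ τ ≤ (1 - ξ) ^ τo * ξ ^ τw := by
  have hτwτ : τw ≤ τ := hτ ▸ le_max_left _ _
  have hτoτ : τo ≤ τ := hτ ▸ le_max_right _ _
  have hL4pos : 0 < L / 4 := by linarith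
  have hL41 : L / 4 ≤ 1 := by linarith
  have h8 : L / 8 = (1/2 : ℝ) * (L / 4) := by ring
  rw [h8, Real.mul_rpow (by norm_num) hL4pos.le]
  rcases le_total ξ (1/2 : ℝ) with hhalf | hhalf
  · -- ξ ≤ 1/2, so 1 - ξ ≥ 1/2
    have h1 : (1/2 : ℝ) ^ τ ≤ (1 - ξ) ^ τo := by
      calc (1/2 : ℝ) ^ τ ≤ (1/2 : ℝ) ^ τo :=
            Real.rpow_le_rpow_of_exponent_ge (by norm_num) (by norm_num) hτoτ
        _ ≤ (1 - ξ) ^ τo := Real.rpow_le_rpow (by norm_num) (by linarith) hτo.le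
    have h2 : (L / 4) ^ τ ≤ ξ ^ τw := by
      calc (L / 4) ^ τ ≤ (L / 4) ^ τw :=
            Real.rpow_le_rpow_of_exponent_ge hL4pos hL41 hτwτ
        _ ≤ ξ ^ τw := Real.rpow_le_rpow hL4pos.le hξ1 hτw.le
    exact mul_le_mul h1 h2 (Real.rpow_nonneg hL4pos.le _)
      (Real.rpow_nonneg (by linarith) _)
  · -- ξ ≥ 1/2
    have h1 : (L / 4) ^ τ ≤ (1 - ξ) ^ τo := by
      calc (L / 4) ^ τ ≤ (L / 4) ^ τo :=
            Real.rpow_le_rpow_of_exponent_ge hL4pos hL41 hτoτ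
        _ ≤ (1 - ξ) ^ τo := Real.rpow_le_rpow hL4pos.le hξ2 hτo.le
    have h2 : (1/2 : ℝ) ^ τ ≤ ξ ^ τw := by
      calc (1/2 : ℝ) ^ τ ≤ (1/2 : ℝ) ^ τw :=
            Real.rpow_le_rpow_of_exponent_ge (by norm_num) (by norm_num) hτwτ
        _ ≤ ξ ^ τw := Real.rpow_le_rpow (by norm_num) hhalf hτw.le
    calc (1/2 : ℝ) ^ τ * (L / 4) ^ τ = (L / 4) ^ τ * (1/2 : ℝ) ^ τ := by ring
      _ ≤ (1 - ξ) ^ τo * ξ ^ τw :=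
          mul_le_mul h1 h2 (Real.rpow_nonneg (by norm_num) _)
            (Real.rpow_nonneg (by linarith) _)

/-- two-sided bound on increments of θ from pointwise bounds on b. -/
theorem stmt_3 (b : ℝ → ℝ) (c C₀ τw τo : ℝ)
    (hc : 0 < c) (hC₀ : 0 < C₀) (hτw : 0 < τw) (hτo : 0 < τo)
    (hb : ∀ S ∈ Set.Icc (0:ℝ) 1,
      c * (1 - S) ^ τo * S ^ τw ≤ b S ∧ b S ≤ C₀)
    (hbint : IntervalIntegrable b MeasureTheory.volume 0 1)
    (θ : ℝ → ℝ) (hθ : ∀ S : ℝ, θ S = ∫ ξ in (0:ℝ)..S, b ξ)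
    (τ : ℝ) (hτ : τ = max τw τo) :
    ∃ Ctil : ℝ, 0 < Ctil ∧
      ∀ S₁ S₂ : ℝ, 0 ≤ S₁ → S₁ ≤ S₂ → S₂ ≤ 1 →
        Ctil * (S₂ - S₁) ^ (1 + τ) ≤ θ S₂ - θ S₁ ∧
        θ S₂ - θ S₁ ≤ C₀ * (S₂ - S₁) := by
  have hτpos : 0 < τ := hτ ▸ lt_max_of_lt_left hτw
  set g : ℝ → ℝ := fun ξ => c * (1 - ξ) ^ τo * ξ ^ τw with hgdef
  have hgcont : Continuous g := by
    apply Continuous.mul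
    · apply continuous_const.mul
      refine continuous_iff_continuousAt.2 fun x => ?_
      exact (Real.continuousAt_rpow_const _ _ (Or.inr hτo.le)).comp
        ((continuous_const.sub continuous_id).continuousAt)
    · exact continuous_iff_continuousAt.2 fun x =>
        Real.continuousAt_rpow_const _ _ (Or.inr hτw.le)
  refine ⟨c / 2 * (1/8 : ℝ) ^ τ, by positivity, fun S₁ S₂ h0 h12 h21 => ?_⟩
  have hsub : ∀ u v : ℝ, 0 ≤ u → v ≤ 1 → u ≤ v →
      IntervalIntegrable b volume u v := fun u v hu hv huv =>
    hbint.mono_set (by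
      rw [Set.uIcc_of_le huv, Set.uIcc_of_le (zero_le_one)]
      exact Set.Icc_subset_Icc hu hv)
  have hII : IntervalIntegrable b volume S₁ S₂ := hsub _ _ h0 h21 h12
  have hdiff : θ S₂ - θ S₁ = ∫ ξ in S₁..S₂, b ξ := by
    rw [hθ, hθ]
    exact intervalIntegral.integral_interval_sub_left
      (hsub 0 S₂ le_rfl h21 (h0.trans h12)) (hsub 0 S₁ le_rfl (h12.trans h21) h0)
  constructor
  · -- lower bound
    rcases eq_or_lt_of_le h12 with rfl | h12'
    · simp only [sub_self, Real.zero_rpow (by positivity : (1:ℝ) + τ ≠ 0), mul_zero]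
      exact le_rfl
    rw [hdiff]
    set L := S₂ - S₁ with hLdef
    have hLpos : 0 < L := by simp only [hLdef]; linarith
    have hL1 : L ≤ 1 := by simp only [hLdef]; linarith
    set a : ℝ := S₁ + L / 4 with hadef
    set q : ℝ := S₂ - L / 4 with hqdef
    have h1a : S₁ ≤ a := by simp only [hadef]; linarith
    have haq : a ≤ q := by simp only [hadef, hqdef, hLdef]; linarith
    have hq2 : q ≤ S₂ := by simp only [hqdef]; linarith
    have hgint : ∀ u v : ℝ, IntervalIntegrable g volume u v :=
      fun u v => hgcont.intervalIntegrable u v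
    have hge0 : ∀ x ∈ Set.Icc S₁ S₂, 0 ≤ g x := by
      intro x hx
      have hx0 : 0 ≤ x := h0.trans hx.1
      have hx1 : x ≤ 1 := hx.2.trans h21
      exact mul_nonneg (mul_nonneg hc.le (Real.rpow_nonneg (by linarith) _))
        (Real.rpow_nonneg hx0 _)
    have step1 : ∫ ξ in S₁..S₂, g ξ ≤ ∫ ξ in S₁..S₂, b ξ :=
      intervalIntegral.integral_mono_on h12 (hgint _ _) hII
        (fun x hx => (hb x ⟨h0.trans hx.1, hx.2.trans h21⟩).1)
    have esplit : ∫ ξ in S₁..S₂, g ξ =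
        (∫ ξ in S₁..a, g ξ) + (∫ ξ in a..q, g ξ) + (∫ ξ in q..S₂, g ξ) := by
      rw [add_assoc,
        intervalIntegral.integral_add_adjacent_intervals (hgint a q) (hgint q S₂),
        intervalIntegral.integral_add_adjacent_intervals (hgint S₁ a) (hgint a S₂)]
    have hnn1 : 0 ≤ ∫ ξ in S₁..a, g ξ :=
      intervalIntegral.integral_nonneg h1a
        (fun x hx => hge0 x ⟨hx.1, hx.2.trans (haq.trans hq2)⟩)
    have hnn2 : 0 ≤ ∫ ξ in q..S₂, g ξ :=
      intervalIntegral.integral_nonneg hq2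
        (fun x hx => hge0 x ⟨(h1a.trans haq).trans hx.1, hx.2⟩)
    have step2 : ∫ ξ in a..q, (c * (L/8) ^ τ) ≤ ∫ ξ in a..q, g ξ := by
      apply intervalIntegral.integral_mono_on haq
        intervalIntegrable_const (hgint _ _)
      intro x hx
      have hx1 : L / 4 ≤ x := by
        have := hx.1; simp only [hadef] at this; linarith
      have hx2 : L / 4 ≤ 1 - x := by
        have := hx.2; simp only [hqdef] at this; linarith
      have hx0 : 0 ≤ x := le_trans (by linarith) hx1
      have hx4 : x ≤ 1 := by linarith
      have := stmt3_aux τw τo τ L x hτw hτo hτ hLpos hL1 hx1 hx2 hx0 hx4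
      calc c * (L/8) ^ τ ≤ c * ((1 - x) ^ τo * x ^ τw) :=
            mul_le_mul_of_nonneg_left this hc.le
        _ = g x := by simp only [hgdef]; ring
    have hconst : ∫ ξ in a..q, (c * (L/8) ^ τ) = (L / 2) * (c * (L/8) ^ τ) := by
      rw [intervalIntegral.integral_const, smul_eq_mul]
      congr 1
      simp only [hadef, hqdef]; ring
    have hfinal : c / 2 * (1/8 : ℝ) ^ τ * L ^ (1 + τ) = (L / 2) * (c * (L/8) ^ τ) := by
      have e1 : L ^ ((1:ℝ) + τ) = L * L ^ τ := by
        rw [Real.rpow_add hLpos, Real.rpow_one]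
      have e2 : (L / 8) ^ τ = L ^ τ * (1/8 : ℝ) ^ τ := by
        rw [show L / 8 = L * (1/8 : ℝ) by ring, Real.mul_rpow hLpos.le (by norm_num)]
      rw [e1, e2]; ring
    calc c / 2 * (1/8 : ℝ) ^ τ * L ^ (1 + τ)
        = (L / 2) * (c * (L/8) ^ τ) := hfinal
      _ = ∫ ξ in a..q, (c * (L/8) ^ τ) := hconst.symm
      _ ≤ ∫ ξ in a..q, g ξ := step2
      _ ≤ (∫ ξ in S₁..a, g ξ) + (∫ ξ in a..q, g ξ) + (∫ ξ in q..S₂, g ξ) := by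
          linarith
      _ = ∫ ξ in S₁..S₂, g ξ := esplit.symm
      _ ≤ ∫ ξ in S₁..S₂, b ξ := step1
  · -- upper bound
    rw [hdiff]
    calc (∫ ξ in S₁..S₂, b ξ) ≤ ∫ _ in S₁..S₂, C₀ :=
          intervalIntegral.integral_mono_on h12 hII intervalIntegrable_const
            (fun x hx => (hb x ⟨h0.trans hx.1, hx.2.trans h21⟩).2)
      _ = C₀ * (S₂ - S₁) := by
          rw [intervalIntegral.integral_const, smul_eq_mul, mul_comm]
end
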